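/- Let r be a natural number, 1 < p < ∞, q = p/(p−1), β ≥ 0, and let ω be a function of modulus-of-continuity type. If {∫_0^{π/(r(n+1))} (ω(t)/(t·sin^β(rt/2)))^q dt}^{1/q} = O((n+1)^{β+1/p} ω(π/(n+1))), then for every m ∈ {0,…,⌊r/2⌋}, {∫_{2mπ/r}^{2mπ/r + π/(r(n+1))} (ω(t)/(t·|sin(rt/2)|^β))^q dt}^{1/q} = O((n+1)^{β+1/p} ω(π/(n+1))). -/

import Mathlib

open Real

open MeasureTheory

noncomputable section

/-- `ω` is a function of modulus-of-continuity type on `[0, 2π]`. -/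
def ModulusType (ω : ℝ → ℝ) : Prop :=
  ContinuousOn ω (Set.Icc 0 (2 * π)) ∧ MonotoneOn ω (Set.Icc 0 (2 * π)) ∧ ω 0 = 0 ∧
    ∀ δ₁ δ₂ : ℝ, 0 ≤ δ₁ → δ₁ ≤ δ₂ → δ₁ + δ₂ ≤ 2 * π → ω (δ₁ + δ₂) ≤ ω δ₁ + ω δ₂

lemma mod_nonneg (ω : ℝ → ℝ) (hω : ModulusType ω) {x : ℝ} (h0 : 0 ≤ x) (h2 : x ≤ 2 * π) :
    0 ≤ ω x := by
  obtain ⟨-, hmono, hzero, -⟩ := hω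
  have := hmono (Set.mem_Icc.2 ⟨le_refl 0, by positivity⟩) (Set.mem_Icc.2 ⟨h0, h2⟩) h0
  linarith [hzero ▸ this]

lemma mod_iter (ω : ℝ → ℝ) (hω : ModulusType ω) :
    ∀ (k : ℕ) (δ : ℝ), 0 ≤ δ → (k : ℝ) * δ ≤ 2 * π → ω ((k : ℝ) * δ) ≤ (k : ℝ) * ω δ := by
  obtain ⟨-, -, hzero, hsub⟩ := hω
  intro k
  induction k with
  | zero => intro δ _ _; simp [hzero]
  | succ k ih =>
    intro δ hδ hk
    rcases Nat.eq_zero_or_pos k with hk0 | hk0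
    · subst hk0; simp
    have hkδ : (k : ℝ) * δ ≤ 2 * π := by
      push_cast at hk; nlinarith
    have h1 : ω (δ + (k : ℝ) * δ) ≤ ω δ + ω ((k : ℝ) * δ) := by
      apply hsub δ ((k : ℝ) * δ) hδ
      · nlinarith [(Nat.one_le_cast.2 hk0 : (1:ℝ) ≤ k)]
      · push_cast at hk ⊢; nlinarith
    have h2 : ((k : ℕ) + 1 : ℝ) * δ = δ + (k : ℝ) * δ := by ring
    push_cast [h2] at *
    nlinarith [ih δ hδ hkδ]

lemma mod_zero_of_pi_zero (ω : ℝ → ℝ) (hω : ModulusType ω) (hπ0 : ω π = 0) :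
    ∀ x, 0 ≤ x → x ≤ 2 * π → ω x = 0 := by
  obtain ⟨-, hmono, hzero, hsub⟩ := id hω
  have hπ := Real.pi_pos
  intro x h0 h2
  rcases le_or_gt x π with hx | hx
  · have h1 : ω x ≤ ω π := hmono (Set.mem_Icc.2 ⟨h0, by linarith⟩)
      (Set.mem_Icc.2 ⟨hπ.le, by linarith⟩) hx
    have h2' : 0 ≤ ω x := mod_nonneg ω hω h0 (by linarith)
    linarith
  · have h1 : ω ((x - π) + π) ≤ ω (x - π) + ω π := by
      apply hsub _ _ (by linarith) (by linarith) (by linarith)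
    have h3 : ω (x - π) ≤ ω π := hmono (Set.mem_Icc.2 ⟨by linarith, by linarith⟩)
      (Set.mem_Icc.2 ⟨hπ.le, by linarith⟩) (by linarith)
    have h2' : 0 ≤ ω x := mod_nonneg ω hω h0 (by linarith)
    have h4 : 0 ≤ ω (x - π) := mod_nonneg ω hω (by linarith) (by linarith)
    have : (x - π) + π = x := by ring
    rw [this] at h1
    linarith

/-- key algebraic identity for the integrand bounds -/
lemma div_rpow_eq {A a c : ℝ} (hA : 0 ≤ A) (ha : 0 < a) (hc : 0 < c) {s : ℝ} (hs : 0 < s)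
    (β q : ℝ) :
    (A / (a * (c * s) ^ β)) ^ q = (A / a / c ^ β) ^ q * s ^ (-(β * q)) := by
  rw [Real.mul_rpow hc.le hs.le]
  have h1 : A / (a * (c ^ β * s ^ β)) = (A / a / c ^ β) * (s ^ β)⁻¹ := by
    have hcb : (0:ℝ) < c ^ β := Real.rpow_pos_of_pos hc β
    have hsb : (0:ℝ) < s ^ β := Real.rpow_pos_of_pos hs β
    field_simp
  rw [h1, Real.mul_rpow (by positivity) (by positivity), ← Real.rpow_neg hs.le,
    ← Real.rpow_mul hs.le, neg_mul]


set_option maxHeartbeats 4000000 in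
/-- **Lemma 7.** Condition (2.81) transfers to the right neighbourhoods of the
points `2mπ/r`. -/
theorem lemma_seven (r : ℕ) (hr : 1 ≤ r) (p q β : ℝ) (hp : 1 < p) (hq : q = p / (p - 1))
    (hβ : 0 ≤ β) (ω : ℝ → ℝ) (hω : ModulusType ω)
    (h : ∃ C : ℝ, ∀ n : ℕ,
      (∫ t in (0:ℝ)..(π / (r * ((n : ℝ) + 1))),
          (ω t / (t * Real.sin (r * t / 2) ^ β)) ^ q) ^ (1 / q)
        ≤ C * (((n : ℝ) + 1) ^ (β + 1 / p) * ω (π / ((n : ℝ) + 1)))) :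
    ∀ m : ℕ, m ≤ r / 2 →
      ∃ C : ℝ, ∀ n : ℕ,
        (∫ t in (2 * m * π / r)..(2 * m * π / r + π / (r * ((n : ℝ) + 1))),
            (ω t / (t * |Real.sin (r * t / 2)| ^ β)) ^ q) ^ (1 / q)
          ≤ C * (((n : ℝ) + 1) ^ (β + 1 / p) * ω (π / ((n : ℝ) + 1))) := by
  intro m hm
  have hπ := Real.pi_pos
  have hr0 : (0:ℝ) < r := by exact_mod_cast hr
  have hr1 : (1:ℝ) ≤ r := by exact_mod_cast hr
  have hp0 : (0:ℝ) < p - 1 := by linarith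
  have hq1 : 1 < q := by rw [hq, lt_div_iff₀ hp0]; linarith
  have hq0 : (0:ℝ) < q := by linarith
  have hqne : q ≠ 0 := ne_of_gt hq0
  have h2m : ((m : ℝ)) * 2 ≤ (r : ℝ) := by
    exact_mod_cast (Nat.le_div_iff_mul_le two_pos).1 hm
  have hmono := hω.2.1
  -- position of the left endpoint
  have ha0 : (0:ℝ) ≤ 2 * m * π / r := by positivity
  have haπ : 2 * (m:ℝ) * π / r ≤ π := by
    rw [div_le_iff₀ hr0]; nlinarith
  rcases eq_or_lt_of_le (mod_nonneg ω hω hπ.le (by linarith)) with hωπ | hωπ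
  -- Case A : ω π = 0, hence ω vanishes on [0, 2π] and both sides are 0.
  · refine ⟨0, fun n => ?_⟩
    have hn1 : (0:ℝ) < (n:ℝ) + 1 := by positivity
    have hh0 : (0:ℝ) < π / (r * ((n:ℝ) + 1)) := by positivity
    have hhπ : π / (r * ((n:ℝ) + 1)) ≤ π := by
      apply div_le_self hπ.le
      have h1 : (1:ℝ) ≤ (n:ℝ) + 1 := by linarith [Nat.cast_nonneg (α := ℝ) n]
      nlinarith [hr1]
    have hzero : Set.EqOn (fun t => (ω t / (t * |Real.sin (r * t / 2)| ^ β)) ^ q)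
        (fun _ => (0:ℝ)) (Set.uIcc (2 * m * π / r) (2 * m * π / r + π / (r * ((n:ℝ) + 1)))) := by
      intro t ht
      rw [Set.uIcc_of_le (by linarith)] at ht
      obtain ⟨ht1, ht2⟩ := ht
      have h0t : 0 ≤ t := le_trans ha0 ht1
      have h2t : t ≤ 2 * π := by push_cast at ht2 ⊢; linarith
      simp only
      rw [mod_zero_of_pi_zero ω hω hωπ.symm t h0t h2t, zero_div, Real.zero_rpow hqne]
    rw [intervalIntegral.integral_congr hzero, intervalIntegral.integral_const, smul_zero,
      Real.zero_rpow (one_div_ne_zero hqne), zero_mul]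
  -- Case B : ω π > 0
  have hω2π : 0 ≤ ω (2 * π) := mod_nonneg ω hω (by positivity) (le_refl _)
  have hωn : ∀ n : ℕ, ω π / ((n:ℝ) + 1) ≤ ω (π / ((n:ℝ) + 1)) := by
    intro n
    have hn1 : (0:ℝ) < (n:ℝ) + 1 := by positivity
    have e : ((n + 1 : ℕ) : ℝ) * (π / ((n:ℝ) + 1)) = π := by
      push_cast; field_simp
    have := mod_iter ω hω (n + 1) (π / ((n:ℝ) + 1)) (by positivity) (by rw [e]; linarith)
    rw [e] at this
    rw [div_le_iff₀ hn1]
    push_cast at this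
    linarith
  rcases Nat.eq_zero_or_pos m with hm0 | hm1
  -- m = 0 : direct from the hypothesis
  · subst hm0
    obtain ⟨C, hC⟩ := h
    refine ⟨C, fun n => ?_⟩
    have hn1 : (0:ℝ) < (n:ℝ) + 1 := by positivity
    have hh0 : (0:ℝ) < π / (r * ((n:ℝ) + 1)) := by positivity
    simp only [Nat.cast_zero, mul_zero, zero_mul, zero_div, zero_add]
    have heq : Set.EqOn (fun t => (ω t / (t * |Real.sin ((r:ℝ) * t / 2)| ^ β)) ^ q)
        (fun t => (ω t / (t * Real.sin ((r:ℝ) * t / 2) ^ β)) ^ q)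
        (Set.uIcc (0:ℝ) (π / (r * ((n:ℝ) + 1)))) := by
      intro t ht
      rw [Set.uIcc_of_le hh0.le] at ht
      have hs : 0 ≤ Real.sin ((r:ℝ) * t / 2) := by
        apply Real.sin_nonneg_of_nonneg_of_le_pi
        · have := ht.1; positivity
        · have h2 : t * ((r:ℝ) * ((n:ℝ) + 1)) ≤ π := (le_div_iff₀ (by positivity)).1 ht.2
          nlinarith [ht.1, Nat.cast_nonneg (α := ℝ) n, hr1]
      simp only
      rw [abs_of_nonneg hs]
    rw [intervalIntegral.integral_congr heq]
    exact hC n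
  -- m ≥ 1
  have hm1' : (1:ℝ) ≤ (m:ℝ) := by exact_mod_cast hm1
  set a := 2 * (m:ℝ) * π / (r:ℝ) with ha_def
  have ha0 : 0 < a := by rw [ha_def]; positivity
  have hπra : π / (r:ℝ) ≤ a := by
    rw [ha_def, div_le_div_iff₀ hr0 hr0]
    nlinarith [mul_nonneg (mul_nonneg (by linarith : (0:ℝ) ≤ 2 * (m:ℝ) - 1) hπ.le) hr0.le]
  have hωa : 0 < ω a := by
    have e : (r:ℝ) * (π / r) = π := by field_simp
    have h1 := mod_iter ω hω r (π / r) (by positivity) (by rw [e]; linarith)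
    rw [e] at h1
    have h2 : ω (π / r) ≤ ω a :=
      hmono (Set.mem_Icc.2 ⟨by positivity, by nlinarith [hπra]⟩)
        (Set.mem_Icc.2 ⟨ha0.le, by linarith [haπ]⟩) hπra
    nlinarith [mod_nonneg ω hω (le_of_lt ha0) (by linarith [haπ] : a ≤ 2 * π)]
  have hsin : ∀ s : ℝ, |Real.sin ((r:ℝ) * (s + a) / 2)| = |Real.sin ((r:ℝ) * s / 2)| := by
    intro s
    have e : (r:ℝ) * (s + a) / 2 = (r:ℝ) * s / 2 + (m:ℕ) * π := by
      rw [ha_def]; field_simp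
    rw [e, Real.sin_add_nat_mul_pi, abs_mul, abs_pow, abs_neg, abs_one, one_pow, one_mul]
  rcases lt_or_ge (β * q) 1 with hcase | hcase
  -- Subcase β q < 1 : direct estimate
  · have hE : 0 < 1 - β * q := by linarith
    set C1 := (ω (2 * π) / a / ((r:ℝ) / π) ^ β) ^ q with hC1_def
    have hC1 : 0 ≤ C1 := by
      rw [hC1_def]
      exact Real.rpow_nonneg (by positivity) q
    set K := (C1 * (π / (r:ℝ)) ^ (1 - β * q) / (1 - β * q)) ^ (1 / q) with hK_def
    have hK : 0 ≤ K := Real.rpow_nonneg (by positivity) _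
    refine ⟨K / ω π, fun n => ?_⟩
    have hn1 : (0:ℝ) < (n:ℝ) + 1 := by positivity
    set hh := π / ((r:ℝ) * ((n:ℝ) + 1)) with hh_def
    have hh0 : (0:ℝ) < hh := by rw [hh_def]; positivity
    have hrhh : (r:ℝ) * hh = π / ((n:ℝ) + 1) := by rw [hh_def]; field_simp
    have hπn : π / ((n:ℝ) + 1) ≤ π := div_le_self hπ.le (by linarith)
    have hhπ : hh ≤ π := by
      rw [hh_def]; apply div_le_self hπ.le; nlinarith [Nat.cast_nonneg (α := ℝ) n]
    set F := fun t => (ω t / (t * |Real.sin ((r:ℝ) * t / 2)| ^ β)) ^ q with hF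
    set G := fun s => (ω (s + a) / ((s + a) * |Real.sin ((r:ℝ) * s / 2)| ^ β)) ^ q with hG
    have e1 : (∫ s in (0:ℝ)..hh, F (s + a)) = ∫ t in a..(a + hh), F t := by
      rw [intervalIntegral.integral_comp_add_right F a, zero_add, add_comm hh a]
    have e2 : (fun s => F (s + a)) = G := by
      funext s
      simp only [hF, hG, hsin s]
    have hGnn : ∀ s ∈ Set.Icc (0:ℝ) hh, 0 ≤ G s := by
      intro s hs
      have h2π : s + a ≤ 2 * π := by
        have := hs.2; nlinarith
      apply Real.rpow_nonneg
      exact div_nonneg (mod_nonneg ω hω (by linarith [hs.1]) h2π)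
        (mul_nonneg (by linarith [hs.1]) (Real.rpow_nonneg (abs_nonneg _) β))
    have hGle : ∀ s ∈ Set.Icc (0:ℝ) hh, G s ≤ C1 * s ^ (-(β * q)) := by
      intro s hs
      rcases eq_or_lt_of_le hs.1 with hs0 | hs0
      · -- s = 0
        rw [hG, ← hs0]
        simp only [zero_add, mul_zero, zero_div, Real.sin_zero, abs_zero]
        rcases eq_or_lt_of_le hβ with hβ0 | hβ0
        · rw [← hβ0]
          simp only [Real.rpow_zero, mul_one, zero_mul, neg_zero, div_one]
          rw [hC1_def, ← hβ0]
          simp only [Real.rpow_zero, div_one, mul_one]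
          have hωa2π : ω a ≤ ω (2 * π) :=
            hmono (Set.mem_Icc.2 ⟨ha0.le, by linarith⟩)
              (Set.mem_Icc.2 ⟨by positivity, le_refl _⟩) (by linarith)
          apply Real.rpow_le_rpow (div_nonneg hωa.le ha0.le) ?_ hq0.le
          exact (div_le_div_iff_of_pos_right ha0).2 hωa2π

        · rw [Real.zero_rpow (ne_of_gt hβ0), mul_zero, div_zero, Real.zero_rpow hqne,
            Real.zero_rpow (by nlinarith : -(β * q) ≠ 0), mul_zero]
      · -- 0 < s
        have hs2π : s + a ≤ 2 * π := by nlinarith [hs.2]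
        have hrs : (r:ℝ) * s ≤ π / ((n:ℝ) + 1) := by
          rw [← hrhh]
          nlinarith [hs.2]
        have hrsπ2 : (r:ℝ) * s / 2 ≤ π / 2 := by
          have : π / ((n:ℝ) + 1) ≤ π := hπn
          linarith
        have hsin_nn : 0 ≤ Real.sin ((r:ℝ) * s / 2) :=
          Real.sin_nonneg_of_nonneg_of_le_pi (by positivity) (by linarith)
        have habs : |Real.sin ((r:ℝ) * s / 2)| = Real.sin ((r:ℝ) * s / 2) := abs_of_nonneg hsin_nn
        have hsin_lb : (r:ℝ) / π * s ≤ Real.sin ((r:ℝ) * s / 2) := by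
          have h1 := Real.mul_le_sin (x := (r:ℝ) * s / 2) (by positivity) hrsπ2
          calc (r:ℝ) / π * s = 2 / π * ((r:ℝ) * s / 2) := by ring
            _ ≤ Real.sin ((r:ℝ) * s / 2) := h1
        have hωsa_nn : 0 ≤ ω (s + a) := mod_nonneg ω hω (by linarith) hs2π
        have hωsa_le : ω (s + a) ≤ ω (2 * π) :=
          hmono (Set.mem_Icc.2 ⟨by linarith, hs2π⟩)
            (Set.mem_Icc.2 ⟨by positivity, le_refl _⟩) hs2π
        have hden_pos : 0 < a * ((r:ℝ) / π * s) ^ β := by positivity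
        have hden_le : a * ((r:ℝ) / π * s) ^ β
            ≤ (s + a) * |Real.sin ((r:ℝ) * s / 2)| ^ β := by
          apply mul_le_mul (by linarith) ?_ (by positivity) (by linarith)
          rw [habs]
          exact Real.rpow_le_rpow (by positivity) hsin_lb hβ
        calc G s ≤ (ω (2 * π) / (a * ((r:ℝ) / π * s) ^ β)) ^ q := by
              rw [hG]
              apply Real.rpow_le_rpow ?_ ?_ hq0.le
              · exact div_nonneg hωsa_nn
                  (mul_nonneg (by linarith) (Real.rpow_nonneg (abs_nonneg _) β))
              · exact div_le_div₀ hω2π hωsa_le hden_pos hden_le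
          _ = C1 * s ^ (-(β * q)) := by
              rw [hC1_def]
              exact div_rpow_eq hω2π ha0 (by positivity) hs0 β q
    have hDint : IntervalIntegrable (fun s => C1 * s ^ (-(β * q))) volume 0 hh :=
      (intervalIntegral.intervalIntegrable_rpow' (by linarith)).const_mul C1
    have hGmeas : AEStronglyMeasurable G (volume.restrict (Set.Ioc (0:ℝ) hh)) := by
      have hcont : ContinuousOn G (Set.Ioc (0:ℝ) hh) := by
        rw [hG]
        apply ContinuousOn.rpow_const ?_ (fun x _ => Or.inr hq0.le)
        apply ContinuousOn.div
        · apply hω.1.comp ((continuous_id.add continuous_const).continuousOn)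
          intro s hs
          show s + a ∈ Set.Icc 0 (2 * π)
          exact Set.mem_Icc.2 ⟨by linarith [hs.1.le], by nlinarith [hs.2]⟩
        · apply Continuous.continuousOn
          apply (continuous_id.add continuous_const).mul
          apply Continuous.rpow_const ?_ (fun x => Or.inr hβ)
          exact (Real.continuous_sin.comp (by continuity)).abs
        · intro s hs
          have hsin_pos : 0 < Real.sin ((r:ℝ) * s / 2) := by
            apply Real.sin_pos_of_pos_of_lt_pi (by have := hs.1; positivity)
            have hrs : (r:ℝ) * s ≤ π / ((n:ℝ) + 1) := by
              rw [← hrhh]; nlinarith [hs.2]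
            nlinarith [hπn, hs.1]
          have : 0 < (s + a) * |Real.sin ((r:ℝ) * s / 2)| ^ β := by
            apply mul_pos (by linarith [hs.1])
            exact Real.rpow_pos_of_pos (abs_pos.2 (ne_of_gt hsin_pos)) β
          exact ne_of_gt this
      exact hcont.aestronglyMeasurable measurableSet_Ioc
    have hGint : IntervalIntegrable G volume 0 hh := by
      rw [intervalIntegrable_iff_integrableOn_Ioc_of_le hh0.le]
      apply Integrable.mono ((intervalIntegrable_iff_integrableOn_Ioc_of_le hh0.le).1 hDint)
        hGmeas
      rw [ae_restrict_iff' measurableSet_Ioc]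
      apply Filter.Eventually.of_forall
      intro s hs
      have h1 := hGnn s (Set.Ioc_subset_Icc_self hs)
      have h2 := hGle s (Set.Ioc_subset_Icc_self hs)
      have h3 : (0:ℝ) ≤ C1 * s ^ (-(β * q)) := by
        exact mul_nonneg hC1 (Real.rpow_nonneg (le_of_lt hs.1) _)
      rw [Real.norm_eq_abs, Real.norm_eq_abs, abs_of_nonneg h1, abs_of_nonneg h3]
      exact h2
    have key : (∫ s in (0:ℝ)..hh, G s) ≤ C1 * hh ^ (1 - β * q) / (1 - β * q) := by
      calc (∫ s in (0:ℝ)..hh, G s) ≤ ∫ s in (0:ℝ)..hh, C1 * s ^ (-(β * q)) :=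
            intervalIntegral.integral_mono_on hh0.le hGint hDint hGle
        _ = C1 * hh ^ (1 - β * q) / (1 - β * q) := by
            rw [intervalIntegral.integral_const_mul, integral_rpow (Or.inl (by linarith))]
            rw [Real.zero_rpow (by linarith : -(β * q) + 1 ≠ 0)]
            have : -(β * q) + 1 = 1 - β * q := by ring
            rw [this]
            ring
    have hInn : 0 ≤ ∫ s in (0:ℝ)..hh, G s :=
      intervalIntegral.integral_nonneg hh0.le hGnn
    rw [← e1, e2]
    calc (∫ s in (0:ℝ)..hh, G s) ^ (1 / q)
        ≤ (C1 * hh ^ (1 - β * q) / (1 - β * q)) ^ (1 / q) :=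
          Real.rpow_le_rpow hInn key (by positivity)
      _ = K * ((n:ℝ) + 1) ^ (β + 1 / p - 1) := by
          have e3 : hh = (π / (r:ℝ)) * (((n:ℝ) + 1))⁻¹ := by
            rw [hh_def, ← div_div, div_eq_mul_inv (π / (r:ℝ)) (((n:ℝ) + 1))]
          have e4 : hh ^ (1 - β * q)
              = (π / (r:ℝ)) ^ (1 - β * q) * (((n:ℝ) + 1)) ^ (-(1 - β * q)) := by
            rw [e3, Real.mul_rpow (by positivity) (by positivity),
              Real.inv_rpow hn1.le, ← Real.rpow_neg hn1.le]
          have hexp : -(1 - β * q) * (1 / q) = β + 1 / p - 1 := by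
            rw [hq]; field_simp; ring
          calc (C1 * hh ^ (1 - β * q) / (1 - β * q)) ^ (1 / q)
              = ((C1 * (π / (r:ℝ)) ^ (1 - β * q) / (1 - β * q))
                  * (((n:ℝ) + 1)) ^ (-(1 - β * q))) ^ (1 / q) := by
                rw [e4]; congr 1; ring
            _ = K * ((((n:ℝ) + 1)) ^ (-(1 - β * q))) ^ (1 / q) := by
                rw [Real.mul_rpow (by positivity) (Real.rpow_nonneg hn1.le _), hK_def]
            _ = K * ((n:ℝ) + 1) ^ (β + 1 / p - 1) := by
                rw [← Real.rpow_mul hn1.le, hexp]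
      _ ≤ K / ω π * (((n:ℝ) + 1) ^ (β + 1 / p) * ω (π / ((n:ℝ) + 1))) := by
          have hωπne : ω π ≠ 0 := ne_of_gt hωπ
          have h1 : K * ((n:ℝ) + 1) ^ (β + 1 / p - 1)
              = K / ω π * (((n:ℝ) + 1) ^ (β + 1 / p) * (ω π / ((n:ℝ) + 1))) := by
            rw [Real.rpow_sub hn1, Real.rpow_one]
            field_simp
          rw [h1]
          exact mul_le_mul_of_nonneg_left
            (mul_le_mul_of_nonneg_left (hωn n) (Real.rpow_nonneg hn1.le _))
            (div_nonneg hK hωπ.le)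
  -- Subcase 1 ≤ β q : the integral diverges, hence is 0 by convention
  · refine ⟨0, fun n => ?_⟩
    have hβ0 : 0 < β := by nlinarith
    have hn1 : (0:ℝ) < (n:ℝ) + 1 := by positivity
    set hh := π / ((r:ℝ) * ((n:ℝ) + 1)) with hh_def
    have hh0 : (0:ℝ) < hh := by rw [hh_def]; positivity
    have hrhh : (r:ℝ) * hh = π / ((n:ℝ) + 1) := by rw [hh_def]; field_simp
    have hπn : π / ((n:ℝ) + 1) ≤ π := div_le_self hπ.le (by linarith)
    have hhπ : hh ≤ π := by
      rw [hh_def]; apply div_le_self hπ.le; nlinarith [Nat.cast_nonneg (α := ℝ) n]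
    set c2 := (ω a / (2 * π) / ((r:ℝ) / 2) ^ β) ^ q with hc2_def
    have hc2 : 0 < c2 := by
      rw [hc2_def]
      apply Real.rpow_pos_of_pos
      positivity
    set F := fun t => (ω t / (t * |Real.sin ((r:ℝ) * t / 2)| ^ β)) ^ q with hF
    have hni : ¬ IntervalIntegrable F volume a (a + hh) := by
      intro hFint
      have h1 : IntegrableOn (fun s => F (s + a)) (Set.Ioo 0 hh) volume := by
        have h2 := hFint.comp_add_right a
        rw [sub_self, add_sub_cancel_left] at h2
        exact (intervalIntegrable_iff_integrableOn_Ioo_of_le hh0.le).1 h2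
      have h2 : IntegrableOn (fun s : ℝ => c2 * s ^ (-(β * q))) (Set.Ioo 0 hh) volume := by
        apply Integrable.mono h1 ?_ ?_
        · apply ContinuousOn.aestronglyMeasurable ?_ measurableSet_Ioo
          apply continuousOn_const.mul
          apply ContinuousOn.rpow_const continuousOn_id
          intro x hx
          exact Or.inl (ne_of_gt hx.1)
        · rw [ae_restrict_iff' measurableSet_Ioo]
          apply Filter.Eventually.of_forall
          intro s hs
          have hs0 : 0 < s := hs.1
          have hs2π : s + a ≤ 2 * π := by linarith [hs.2.le, hhπ, haπ]
          have hrs : (r:ℝ) * s ≤ π / ((n:ℝ) + 1) := by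
            rw [← hrhh]; exact mul_le_mul_of_nonneg_left hs.2.le hr0.le
          have hsin_pos : 0 < Real.sin ((r:ℝ) * s / 2) := by
            apply Real.sin_pos_of_pos_of_lt_pi (by positivity)
            linarith [hπn, hπ]
          have habs : |Real.sin ((r:ℝ) * s / 2)| = Real.sin ((r:ℝ) * s / 2) :=
            abs_of_nonneg hsin_pos.le
          have hωsa_nn : 0 ≤ ω (s + a) := mod_nonneg ω hω (by linarith) hs2π
          have hωa_le : ω a ≤ ω (s + a) :=
            hmono (Set.mem_Icc.2 ⟨ha0.le, by linarith⟩)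
              (Set.mem_Icc.2 ⟨by linarith, hs2π⟩) (by linarith)
          have hden_pos : 0 < (s + a) * |Real.sin ((r:ℝ) * s / 2)| ^ β := by
            apply mul_pos (by linarith)
            exact Real.rpow_pos_of_pos (abs_pos.2 (ne_of_gt hsin_pos)) β
          have hden_le : (s + a) * |Real.sin ((r:ℝ) * s / 2)| ^ β
              ≤ 2 * π * ((r:ℝ) / 2 * s) ^ β := by
            apply mul_le_mul hs2π ?_ (by positivity) (by positivity)
            rw [habs]
            apply Real.rpow_le_rpow hsin_pos.le ?_ hβ
            calc Real.sin ((r:ℝ) * s / 2) ≤ (r:ℝ) * s / 2 :=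
                  Real.sin_le (by positivity)
              _ = (r:ℝ) / 2 * s := by ring
          have hle : c2 * s ^ (-(β * q)) ≤ F (s + a) := by
            rw [hF]
            simp only
            rw [hsin s, hc2_def, ← div_rpow_eq hωa.le (by positivity) (by positivity) hs0 β q]
            apply Real.rpow_le_rpow (div_nonneg hωa.le (by positivity)) ?_ hq0.le
            exact div_le_div₀ hωsa_nn hωa_le hden_pos hden_le
          have hFnn : 0 ≤ c2 * s ^ (-(β * q)) :=
            mul_nonneg hc2.le (Real.rpow_nonneg hs0.le _)
          rw [Real.norm_eq_abs, Real.norm_eq_abs, abs_of_nonneg hFnn,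
            abs_of_nonneg (le_trans hFnn hle)]
          exact hle
      have h3 : IntegrableOn (fun s : ℝ => s ^ (-(β * q))) (Set.Ioo 0 hh) volume := by
        have h4 := h2.const_mul c2⁻¹
        have e : (fun s : ℝ => c2⁻¹ * (c2 * s ^ (-(β * q)))) = fun s : ℝ => s ^ (-(β * q)) := by
          funext s
          rw [← mul_assoc, inv_mul_cancel₀ (ne_of_gt hc2), one_mul]
        rwa [e] at h4
      have h5 := (intervalIntegral.integrableOn_Ioo_rpow_iff hh0).1 h3
      linarith
    rw [intervalIntegral.integral_undef hni, Real.zero_rpow (one_div_ne_zero hqne), zero_mul]
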